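/- Let k ≥ 2 be a natural number and let n be a natural number with n ≤ 2^(k−1)/(e·k) − 1, where e is Euler's number. Then there exists a 2-coloring χ : {1,…,n} → Bool such that no k-term arithmetic progression contained in {1,…,n} is monochromatic under χ; that is, for all natural numbers a ≥ 1 and d ≥ 1 with a + (k−1)·d ≤ n, the values χ(a), χ(a+d), …, χ(a+(k−1)d) are not all equal. -/

import Mathlib

open Finset

variable {α : Type*} [Fintype α] [DecidableEq α]

/-- merge two boolean colorings along a set T -/
private def mrg (T : Finset α) (f g : α → Bool) : α → Bool := fun x => if x ∈ T then f x else g x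

lemma indep_card (T : Finset α) (A B : Finset (α → Bool))
    (hA : ∀ f g, (∀ x ∈ T, f x = g x) → (f ∈ A ↔ g ∈ A))
    (hB : ∀ f g, (∀ x ∉ T, f x = g x) → (f ∈ B ↔ g ∈ B)) :
    (A ∩ B).card * 2 ^ Fintype.card α = A.card * B.card := by
  classical
  have key : (A ×ˢ B).card = ((A ∩ B) ×ˢ (univ : Finset (α → Bool))).card := by
    apply Finset.card_bij' (fun p _ => (mrg T p.1 p.2, mrg T p.2 p.1))
      (fun p _ => (mrg T p.1 p.2, mrg T p.2 p.1))
    · rintro ⟨f, g⟩ hp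
      rw [Finset.mem_product] at hp
      simp only [Finset.mem_product, Finset.mem_inter, Finset.mem_univ, and_true]
      exact ⟨(hA f _ (by intro x hx; simp [mrg, hx])).mp hp.1,
        (hB g _ (by intro x hx; simp [mrg, hx])).mp hp.2⟩
    · rintro ⟨f, g⟩ hp
      rw [Finset.mem_product, Finset.mem_inter] at hp
      rw [Finset.mem_product]
      constructor
      · exact (hA f _ (by intro x hx; simp [mrg, hx])).mp hp.1.1
      · exact (hB f _ (by intro x hx; simp [mrg, hx])).mp hp.1.2
    · rintro ⟨f, g⟩ _
      ext x <;> simp [mrg] <;> split <;> simp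
    · rintro ⟨f, g⟩ _
      ext x <;> simp [mrg] <;> split <;> simp
  rw [Finset.card_product, Finset.card_product, Finset.card_univ, Fintype.card_fun,
    Fintype.card_bool] at key
  omega

variable {α : Type*} [Fintype α] [DecidableEq α]

lemma count_single (y : α) (b : Bool) :
    (univ.filter fun f : α → Bool => f y = b).card * 2 = 2 ^ Fintype.card α := by
  classical
  have hbij : (univ.filter fun f : α → Bool => f y = b).card
      = (univ.filter fun f : α → Bool => ¬ (f y = b)).card := by
    refine Finset.card_bij' (fun f _ => Function.update f y (!b))
      (fun f _ => Function.update f y b) ?hi ?hj ?hli ?hri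
    case hi => intro f hf; simp
    case hj => intro f hf; simp
    case hli =>
      intro f hf
      simp only [mem_filter, mem_univ, true_and] at hf
      ext x
      by_cases hx : x = y
      · rw [hx]; simp [hf]
      · simp [Function.update_of_ne hx]
    case hri =>
      intro f hf
      simp only [mem_filter, mem_univ, true_and] at hf
      ext x
      by_cases hx : x = y
      · rw [hx]; simp; cases hb : f y <;> cases b <;> simp_all
      · simp [Function.update_of_ne hx]
  have htot : ((univ : Finset (α → Bool)).filter (fun f => f y = b)).card
      + ((univ : Finset (α → Bool)).filter (fun f => ¬ f y = b)).card = 2 ^ Fintype.card α := by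
    rw [Finset.card_filter_add_card_filter_not, Finset.card_univ, Fintype.card_fun,
      Fintype.card_bool]
  rw [← hbij] at htot
  linarith

lemma count_all_eq (T : Finset α) (b : Bool) :
    (univ.filter fun f : α → Bool => ∀ x ∈ T, f x = b).card * 2 ^ T.card
      = 2 ^ Fintype.card α := by
  classical
  induction T using Finset.induction_on with
  | empty => simp [Finset.card_univ, Fintype.card_fun]
  | @insert y T hy ih =>
    have hsplit : (univ.filter fun f : α → Bool => ∀ x ∈ insert y T, f x = b)
        = (univ.filter fun f : α → Bool => f y = b)
          ∩ (univ.filter fun f : α → Bool => ∀ x ∈ T, f x = b) := by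
      ext f; simp [Finset.forall_mem_insert]
    have hind := indep_card ({y} : Finset α)
      (univ.filter fun f : α → Bool => f y = b)
      (univ.filter fun f : α → Bool => ∀ x ∈ T, f x = b)
      (by intro f g hfg; simp only [mem_filter, mem_univ, true_and]
          rw [hfg y (mem_singleton_self y)])
      (by intro f g hfg; simp only [mem_filter, mem_univ, true_and]
          constructor <;> intro h x hx
          · rw [← hfg x (by simp; rintro rfl; exact hy hx)]; exact h x hx
          · rw [hfg x (by simp; rintro rfl; exact hy hx)]; exact h x hx)
    rw [hsplit, Finset.card_insert_of_notMem hy]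
    have h2 := count_single y b
    have hm : 0 < 2 ^ Fintype.card α := Nat.pow_pos (by norm_num)
    set A := univ.filter fun f : α → Bool => f y = b
    set B := univ.filter fun f : α → Bool => ∀ x ∈ T, f x = b
    refine Nat.eq_of_mul_eq_mul_right hm ?_
    calc (A ∩ B).card * 2 ^ (T.card + 1) * 2 ^ Fintype.card α
        = ((A ∩ B).card * 2 ^ Fintype.card α) * 2 ^ T.card * 2 := by ring
      _ = (A.card * B.card) * 2 ^ T.card * 2 := by rw [hind]
      _ = (A.card * 2) * (B.card * 2 ^ T.card) := by ring
      _ = 2 ^ Fintype.card α * 2 ^ Fintype.card α := by rw [h2, ih]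

lemma count_const_on (T : Finset α) (x₀ : α) (hx : x₀ ∈ T) :
    (univ.filter fun f : α → Bool => ∀ x ∈ T, f x = f x₀).card * 2 ^ T.card
      = 2 ^ Fintype.card α * 2 := by
  classical
  have hsplit : (univ.filter fun f : α → Bool => ∀ x ∈ T, f x = f x₀)
      = (univ.filter fun f : α → Bool => ∀ x ∈ T, f x = true)
        ∪ (univ.filter fun f : α → Bool => ∀ x ∈ T, f x = false) := by
    ext f
    simp only [mem_filter, mem_univ, true_and, mem_union]
    constructor
    · intro h
      cases hb : f x₀
      · right; intro x hxT; rw [h x hxT, hb]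
      · left; intro x hxT; rw [h x hxT, hb]
    · rintro (h | h) x hxT
      · rw [h x hxT, h x₀ hx]
      · rw [h x hxT, h x₀ hx]
  have hdisj : Disjoint (univ.filter fun f : α → Bool => ∀ x ∈ T, f x = true)
      (univ.filter fun f : α → Bool => ∀ x ∈ T, f x = false) := by
    rw [Finset.disjoint_left]
    intro f hf hf'
    simp only [mem_filter, mem_univ, true_and] at hf hf'
    have h1 := hf x₀ hx; have h2 := hf' x₀ hx; simp_all
  rw [hsplit, Finset.card_union_of_disjoint hdisj, add_mul, count_all_eq T true,
    count_all_eq T false, mul_two]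

open Finset

lemma eps_pow_bound (m : ℕ) (ε : ℝ) (hε : 0 ≤ ε) (h : ε * (m + 1) ≤ 1) :
    Real.exp (-1) ≤ (1 - ε) ^ m := by
  have hm1 : (0:ℝ) < m + 1 := by positivity
  have hεle : ε ≤ 1 / (m + 1) := by
    rw [le_div_iff₀ hm1]; linarith
  have hbase : (m : ℝ) / (m + 1) ≤ 1 - ε := by
    rw [div_le_iff₀ hm1] at *
    have : ε * (m+1) ≤ 1 := h
    nlinarith
  have hbase0 : (0:ℝ) ≤ (m : ℝ) / (m + 1) := by positivity
  have hpow : ((m : ℝ) / (m + 1)) ^ m ≤ (1 - ε) ^ m := pow_le_pow_left₀ hbase0 hbase m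
  refine le_trans ?_ hpow
  rcases Nat.eq_zero_or_pos m with hm | hm
  · subst hm; simp [Real.exp_neg]
    exact inv_le_one_of_one_le₀ (Real.one_le_exp (by norm_num))
  · have hm0 : (0:ℝ) < m := by exact_mod_cast hm
    have h1 : ((m:ℝ) + 1) / m ≤ Real.exp (1 / m) := by
      have := Real.add_one_le_exp (1 / m : ℝ)
      have : (1:ℝ)/m + 1 ≤ Real.exp (1/m) := this
      calc ((m:ℝ)+1)/m = 1/m + 1 := by field_simp; ring
        _ ≤ Real.exp (1/m) := this
    have h2 : (((m:ℝ) + 1) / m) ^ m ≤ Real.exp 1 := by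
      calc (((m:ℝ)+1)/m)^m ≤ Real.exp (1/m) ^ m := by
            apply pow_le_pow_left₀ (by positivity) h1
        _ = Real.exp (m * (1/m)) := by rw [Real.exp_nat_mul]
        _ = Real.exp 1 := by rw [mul_one_div, div_self (ne_of_gt hm0)]
    have hpos : (0:ℝ) < (((m:ℝ)+1)/m)^m := by positivity
    rw [Real.exp_neg]
    rw [show ((m:ℝ)/(m+1))^m = ((((m:ℝ)+1)/m)^m)⁻¹ by
      rw [← inv_pow]; congr 1; rw [inv_div]]
    exact inv_anti₀ hpos h2

namespace LLLAP
open Finset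

variable (k n : ℕ)

/-- the i-th point of the AP `q = (a,d)`, as an element of `Fin (n+1)` -/
def pt (q : ℕ × ℕ) (i : ℕ) : Fin (n+1) := ⟨(q.1 + i * q.2) % (n+1), Nat.mod_lt _ (Nat.succ_pos n)⟩

/-- the point set of the AP `q` -/
def pts (q : ℕ × ℕ) : Finset (Fin (n+1)) := (range k).image (pt n q)

/-- the collection of k-term APs inside {1,…,n} -/
def APs : Finset (ℕ × ℕ) := ((Icc 1 n) ×ˢ (Icc 1 n)).filter fun q => q.1 + (k-1) * q.2 ≤ n

lemma mem_APs {q : ℕ × ℕ} : q ∈ APs k n ↔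
    (1 ≤ q.1 ∧ q.1 ≤ n) ∧ (1 ≤ q.2 ∧ q.2 ≤ n) ∧ q.1 + (k-1) * q.2 ≤ n := by
  simp [APs, Finset.mem_filter, Finset.mem_product, Finset.mem_Icc]; tauto

lemma pt_val {q : ℕ × ℕ} (hq : q ∈ APs k n) {i : ℕ} (hi : i < k) :
    (pt n q i : ℕ) = q.1 + i * q.2 := by
  rw [mem_APs] at hq
  have : q.1 + i * q.2 ≤ n := by
    have h1 : i * q.2 ≤ (k-1) * q.2 := Nat.mul_le_mul_right _ (by omega)
    omega
  simp [pt, Nat.mod_eq_of_lt (by omega : q.1 + i * q.2 < n + 1)]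

lemma mem_pts {q : ℕ × ℕ} (hq : q ∈ APs k n) {x : Fin (n+1)} :
    x ∈ pts k n q ↔ ∃ i < k, q.1 + i * q.2 = (x : ℕ) := by
  simp only [pts, Finset.mem_image, Finset.mem_range]
  constructor
  · rintro ⟨i, hi, rfl⟩; exact ⟨i, hi, (pt_val k n hq hi).symm⟩
  · rintro ⟨i, hi, hx⟩
    exact ⟨i, hi, by apply Fin.ext; rw [pt_val k n hq hi, hx]⟩

lemma pts_card {q : ℕ × ℕ} (hq : q ∈ APs k n) : (pts k n q).card = k := by
  rw [pts, Finset.card_image_of_injOn, Finset.card_range]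
  intro i hi j hj hij
  rw [Finset.mem_coe, Finset.mem_range] at hi hj
  have h2 : 1 ≤ q.2 := ((mem_APs k n).mp hq).2.1.1
  have := congrArg (fun x : Fin (n+1) => (x : ℕ)) hij
  simp only [pt_val k n hq hi, pt_val k n hq hj] at this
  have : i * q.2 = j * q.2 := by omega
  exact Nat.eq_of_mul_eq_mul_right (by omega) this

lemma pt_zero_mem {q : ℕ × ℕ} (hk : 1 ≤ k) : pt n q 0 ∈ pts k n q :=
  Finset.mem_image_of_mem _ (Finset.mem_range.mpr hk)

/-- the set of colorings that are monochromatic on `q` -/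
def monoSet (q : ℕ × ℕ) : Finset (Fin (n+1) → Bool) :=
  univ.filter fun f => ∀ x ∈ pts k n q, f x = f (pt n q 0)

/-- the set of colorings avoiding a monochromatic AP in `S` -/
def avoid (S : Finset (ℕ × ℕ)) : Finset (Fin (n+1) → Bool) :=
  univ.filter fun f => ∀ q ∈ S, ¬ (∀ x ∈ pts k n q, f x = f (pt n q 0))
/-- per-point degree bound : at most `n-1` APs pass through a given point -/
lemma point_bound (hk : 2 ≤ k) (x : Fin (n+1)) :
    ((APs k n).filter fun r => x ∈ pts k n r).card ≤ n - 1 := by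
  classical
  set xv := (x : ℕ) with hxv
  have hxn : xv ≤ n := by omega
  have hk1 : 0 < k - 1 := by omega
  rcases Nat.eq_zero_or_pos xv with hx0 | hx1
  · have hemp : ((APs k n).filter fun r => x ∈ pts k n r) = ∅ := by
      rw [Finset.filter_eq_empty_iff]
      intro r hr hmem
      rw [mem_pts k n hr] at hmem
      obtain ⟨i, hik, hieq⟩ := hmem
      have h1 : 1 ≤ r.1 := ((mem_APs k n).mp hr).1.1
      omega
    rw [hemp]; simp
  set D : ℕ → Finset ℕ := fun i =>
    (Icc 1 n).filter (fun d => i*d + 1 ≤ xv ∧ xv + (k-1)*d ≤ n + i*d) with hD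
  have hsub : ((APs k n).filter fun r => x ∈ pts k n r)
      ⊆ (range k).biUnion (fun i => (D i).image (fun d => (xv - i*d, d))) := by
    rintro ⟨a', d'⟩ hr
    rw [Finset.mem_filter] at hr
    obtain ⟨hrA, hrx⟩ := hr
    rw [mem_pts k n hrA] at hrx
    obtain ⟨i, hik, hieq⟩ := hrx
    rw [mem_APs] at hrA
    simp only at hrA hieq
    rw [Finset.mem_biUnion]
    refine ⟨i, Finset.mem_range.mpr hik, ?_⟩
    rw [Finset.mem_image]
    refine ⟨d', ?_, ?_⟩
    · rw [hD]
      simp only [Finset.mem_filter, Finset.mem_Icc]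
      refine ⟨⟨hrA.2.1.1, hrA.2.1.2⟩, by omega, ?_⟩
      have h1 : i ≤ k - 1 := by omega
      have h2 : i * d' ≤ (k-1) * d' := Nat.mul_le_mul_right _ h1
      omega
    · simp only [Prod.mk.injEq]
      exact ⟨by omega, trivial⟩
  have hIcc : ∀ B : ℕ, (Icc 1 B).card = B := fun B => by rw [Nat.card_Icc]; omega
  have hDbound : ∀ i, 0 < i → i < k - 1 → (D i).card ≤ (n-1)/(k-1) := by
    intro i hi0 hik
    have hss : D i ⊆ Icc 1 ((n-1)/(k-1)) := by
      intro d hd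
      rw [hD, Finset.mem_filter, Finset.mem_Icc] at hd
      rw [Finset.mem_Icc]
      refine ⟨hd.1.1, ?_⟩
      rw [Nat.le_div_iff_mul_le hk1]
      have hc : d * (k-1) = (k-1) * d := Nat.mul_comm _ _
      have h1 : i * d + 1 ≤ xv := hd.2.1
      have h2 : xv + (k-1)*d ≤ n + i*d := hd.2.2
      omega
    calc (D i).card ≤ (Icc 1 ((n-1)/(k-1))).card := Finset.card_le_card hss
      _ = (n-1)/(k-1) := hIcc _
  have hD0 : (D 0).card ≤ (n - xv)/(k-1) := by
    have hss : D 0 ⊆ Icc 1 ((n-xv)/(k-1)) := by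
      intro d hd
      rw [hD, Finset.mem_filter, Finset.mem_Icc] at hd
      rw [Finset.mem_Icc]
      refine ⟨hd.1.1, ?_⟩
      rw [Nat.le_div_iff_mul_le hk1]
      have hc : d * (k-1) = (k-1) * d := Nat.mul_comm _ _
      have h1 : 0 * d + 1 ≤ xv := hd.2.1
      have h2 : xv + (k-1)*d ≤ n + 0*d := hd.2.2
      omega
    calc (D 0).card ≤ (Icc 1 ((n-xv)/(k-1))).card := Finset.card_le_card hss
      _ = (n-xv)/(k-1) := hIcc _
  have hDk : (D (k-1)).card ≤ (xv - 1)/(k-1) := by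
    have hss : D (k-1) ⊆ Icc 1 ((xv-1)/(k-1)) := by
      intro d hd
      rw [hD, Finset.mem_filter, Finset.mem_Icc] at hd
      rw [Finset.mem_Icc]
      refine ⟨hd.1.1, ?_⟩
      rw [Nat.le_div_iff_mul_le hk1]
      have hc : d * (k-1) = (k-1) * d := Nat.mul_comm _ _
      have h1 : (k-1) * d + 1 ≤ xv := hd.2.1
      omega
    calc (D (k-1)).card ≤ (Icc 1 ((xv-1)/(k-1))).card := Finset.card_le_card hss
      _ = (xv-1)/(k-1) := hIcc _
  have hrange : range k = insert 0 (insert (k-1) (Ioo 0 (k-1))) := by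
    ext i
    simp only [Finset.mem_range, Finset.mem_insert, Finset.mem_Ioo]
    omega
  have hmid : ∑ i ∈ Ioo 0 (k-1), (D i).card ≤ (k-2) * ((n-1)/(k-1)) := by
    calc ∑ i ∈ Ioo 0 (k-1), (D i).card ≤ ∑ _i ∈ Ioo 0 (k-1), (n-1)/(k-1) :=
          Finset.sum_le_sum (fun i hi => by
            rw [Finset.mem_Ioo] at hi; exact hDbound i hi.1 hi.2)
      _ = (k-2) * ((n-1)/(k-1)) := by
          have h102 : k - 1 - 0 - 1 = k - 2 := by omega
          rw [Finset.sum_const, smul_eq_mul, Nat.card_Ioo, h102]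
  have hdivadd : (n-xv)/(k-1) + (xv-1)/(k-1) ≤ (n-1)/(k-1) := by
    calc (n-xv)/(k-1) + (xv-1)/(k-1) ≤ (n - xv + (xv-1))/(k-1) :=
          Nat.add_div_le_add_div _ _ _
      _ ≤ (n-1)/(k-1) := Nat.div_le_div_right (by omega)
  have hfinal : (n-1)/(k-1) + (k-2) * ((n-1)/(k-1)) = ((n-1)/(k-1)) * (k-1) := by
    have h1 : k - 1 = (k-2) + 1 := by omega
    rw [h1, Nat.mul_succ, Nat.mul_comm]
    exact Nat.add_comm _ _
  calc ((APs k n).filter fun r => x ∈ pts k n r).card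
      ≤ ((range k).biUnion (fun i => (D i).image (fun d => (xv - i*d, d)))).card :=
        Finset.card_le_card hsub
    _ ≤ ∑ i ∈ range k, ((D i).image (fun d => (xv - i*d, d))).card := Finset.card_biUnion_le
    _ ≤ ∑ i ∈ range k, (D i).card := Finset.sum_le_sum (fun i _ => Finset.card_image_le)
    _ ≤ (n-1)/(k-1) + (k-2) * ((n-1)/(k-1)) := by
        rw [hrange, Finset.sum_insert (by simp; omega), Finset.sum_insert (by simp)]
        calc (D 0).card + ((D (k-1)).card + ∑ i ∈ Ioo 0 (k-1), (D i).card)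
            = (D 0).card + (D (k-1)).card + ∑ i ∈ Ioo 0 (k-1), (D i).card :=
              (Nat.add_assoc _ _ _).symm
          _ ≤ ((n-xv)/(k-1) + (xv-1)/(k-1)) + (k-2) * ((n-1)/(k-1)) :=
              add_le_add (add_le_add hD0 hDk) hmid
          _ ≤ (n-1)/(k-1) + (k-2) * ((n-1)/(k-1)) := Nat.add_le_add_right hdivadd _
    _ = ((n-1)/(k-1)) * (k-1) := hfinal
    _ ≤ n - 1 := Nat.div_mul_le_self _ _

lemma degree_bound (hk : 2 ≤ k) {q : ℕ × ℕ} (hq : q ∈ APs k n) :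
    ((APs k n).filter fun r => ¬ Disjoint (pts k n r) (pts k n q)).card ≤ k * (n-1) := by
  classical
  have hsub : ((APs k n).filter fun r => ¬ Disjoint (pts k n r) (pts k n q))
      ⊆ (pts k n q).biUnion (fun x => (APs k n).filter fun r => x ∈ pts k n r) := by
    intro r hr
    rw [Finset.mem_filter] at hr
    obtain ⟨hrA, hrd⟩ := hr
    rw [Finset.not_disjoint_iff] at hrd
    obtain ⟨x, hx1, hx2⟩ := hrd
    exact Finset.mem_biUnion.mpr ⟨x, hx2, Finset.mem_filter.mpr ⟨hrA, hx1⟩⟩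
  calc ((APs k n).filter fun r => ¬ Disjoint (pts k n r) (pts k n q)).card
      ≤ ((pts k n q).biUnion (fun x => (APs k n).filter fun r => x ∈ pts k n r)).card :=
        Finset.card_le_card hsub
    _ ≤ ∑ x ∈ pts k n q, ((APs k n).filter fun r => x ∈ pts k n r).card :=
        Finset.card_biUnion_le
    _ ≤ ∑ _x ∈ pts k n q, (n-1) := Finset.sum_le_sum (fun x _ => point_bound k n hk x)
    _ = k * (n-1) := by rw [Finset.sum_const, smul_eq_mul, pts_card k n hq]

lemma mono_count (hk : 2 ≤ k) {q : ℕ × ℕ} (hq : q ∈ APs k n) :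
    (monoSet k n q).card * 2 ^ k = 2 ^ (n+1) * 2 := by
  have h := count_const_on (pts k n q) (pt n q 0) (pt_zero_mem k n (by omega))
  rw [pts_card k n hq, Fintype.card_fin] at h
  unfold monoSet
  convert h using 3
  exact (Finset.filter_congr_decidable _ _ _).symm

lemma avoid_insert (q : ℕ × ℕ) (S : Finset (ℕ × ℕ)) :
    avoid k n (insert q S)
      = (avoid k n S).filter (fun f => ¬ (∀ x ∈ pts k n q, f x = f (pt n q 0))) := by
  ext f
  simp only [avoid, Finset.mem_filter, Finset.mem_univ, true_and,
    Finset.forall_mem_insert]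
  tauto

lemma avoid_anti {S S' : Finset (ℕ × ℕ)} (h : S' ⊆ S) : avoid k n S ⊆ avoid k n S' := by
  intro f hf
  simp only [avoid, Finset.mem_filter, Finset.mem_univ, true_and] at hf ⊢
  exact fun q hq => hf q (h hq)

lemma avoid_filter_mono (q : ℕ × ℕ) (S : Finset (ℕ × ℕ)) :
    (avoid k n S).filter (fun f => ∀ x ∈ pts k n q, f x = f (pt n q 0))
      = monoSet k n q ∩ avoid k n S := by
  ext f
  simp only [avoid, monoSet, Finset.mem_filter, Finset.mem_inter, Finset.mem_univ, true_and]
  tauto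

lemma indep_avoid (hk : 2 ≤ k) {q : ℕ × ℕ} (hq : q ∈ APs k n) {S₂ : Finset (ℕ × ℕ)}
    (hdisj : ∀ r ∈ S₂, Disjoint (pts k n r) (pts k n q)) :
    (monoSet k n q ∩ avoid k n S₂).card * 2 ^ (n+1)
      = (monoSet k n q).card * (avoid k n S₂).card := by
  have h := indep_card (pts k n q) (monoSet k n q) (avoid k n S₂) ?_ ?_
  · rwa [Fintype.card_fin] at h
  · intro f g hfg
    simp only [monoSet, Finset.mem_filter, Finset.mem_univ, true_and]
    have h0 : pt n q 0 ∈ pts k n q := pt_zero_mem k n (by omega)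
    constructor <;> intro h x hx
    · rw [← hfg x hx, ← hfg _ h0]; exact h x hx
    · rw [hfg x hx, hfg _ h0]; exact h x hx
  · intro f g hfg
    simp only [avoid, Finset.mem_filter, Finset.mem_univ, true_and]
    have key : ∀ r ∈ S₂, (∀ x ∈ pts k n r, f x = f (pt n r 0))
        ↔ (∀ x ∈ pts k n r, g x = g (pt n r 0)) := by
      intro r hr
      have hag : ∀ x ∈ pts k n r, f x = g x := by
        intro x hx
        exact hfg x (Finset.disjoint_left.mp (hdisj r hr) hx)
      have h0 : pt n r 0 ∈ pts k n r := pt_zero_mem k n (by omega)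
      constructor <;> intro h x hx
      · rw [← hag x hx, ← hag _ h0]; exact h x hx
      · rw [hag x hx, hag _ h0]; exact h x hx
    constructor <;> intro h r hr
    · exact fun hm => h r hr ((key r hr).mpr hm)
    · exact fun hm => h r hr ((key r hr).mp hm)

lemma lll_step (hk : 2 ≤ k)
    (Hd : (Real.exp 1 * (2 / 2^k)) * ((k : ℝ) * (n+1)) ≤ 1) :
    ∀ m : ℕ, ∀ S ⊆ APs k n, S.card ≤ m → ∀ q ∈ APs k n,
      (1 - Real.exp 1 * (2 / 2^k)) * ((avoid k n S).card : ℝ)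
        ≤ ((avoid k n (insert q S)).card : ℝ) := by
  classical
  set ε : ℝ := Real.exp 1 * (2 / 2^k) with hεdef
  have hε0 : 0 ≤ ε := by positivity
  have hkn2 : (2:ℝ) ≤ (k : ℝ) * (n+1) := by
    have h1 : (2:ℝ) ≤ (k:ℝ) := by exact_mod_cast hk
    nlinarith [Nat.cast_nonneg (α := ℝ) n]
  have hε1 : ε ≤ 1/2 := by nlinarith
  intro m
  induction m using Nat.strong_induction_on with
  | _ m ih =>
    intro S hS hSm q hq
    by_cases hqS : q ∈ S
    · rw [Finset.insert_eq_self.mpr hqS]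
      have h0 : (0:ℝ) ≤ ((avoid k n S).card : ℝ) := Nat.cast_nonneg _
      nlinarith
    · set S₁ := S.filter (fun r => ¬ Disjoint (pts k n r) (pts k n q)) with hS₁
      set S₂ := S.filter (fun r => Disjoint (pts k n r) (pts k n q)) with hS₂
      have hS₂S : S₂ ⊆ S := Finset.filter_subset _ _
      have hS₁S : S₁ ⊆ S := Finset.filter_subset _ _
      have hunion : S₂ ∪ S₁ = S := by
        rw [hS₁, hS₂]
        exact Finset.filter_union_filter_not_eq _ S
      -- Step A : splitting off the mono part
      have hA : ((avoid k n S).filter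
            (fun f => ∀ x ∈ pts k n q, f x = f (pt n q 0))).card
          + (avoid k n (insert q S)).card = (avoid k n S).card := by
        rw [avoid_insert]
        exact Finset.card_filter_add_card_filter_not _
      -- Step B : the mono part is controlled via independence
      have hB1 : (avoid k n S).filter (fun f => ∀ x ∈ pts k n q, f x = f (pt n q 0))
          ⊆ monoSet k n q ∩ avoid k n S₂ := by
        rw [avoid_filter_mono]
        exact Finset.inter_subset_inter Finset.Subset.rfl (avoid_anti k n hS₂S)
      have hdisj2 : ∀ r ∈ S₂, Disjoint (pts k n r) (pts k n q) := by
        intro r hr; rw [hS₂, Finset.mem_filter] at hr; exact hr.2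
      have hBind := indep_avoid k n hk hq hdisj2
      have hBcnt := mono_count k n hk hq
      have hB : ((monoSet k n q ∩ avoid k n S₂).card : ℝ)
          = (2 / 2^k) * ((avoid k n S₂).card : ℝ) := by
        have h1 : ((monoSet k n q ∩ avoid k n S₂).card : ℝ) * 2^(n+1)
            = ((monoSet k n q).card : ℝ) * ((avoid k n S₂).card : ℝ) := by
          exact_mod_cast congrArg (Nat.cast (R := ℝ)) hBind
        have h2 : ((monoSet k n q).card : ℝ) * 2^k = 2^(n+1) * 2 := by
          exact_mod_cast congrArg (Nat.cast (R := ℝ)) hBcnt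
        have hp1 : (0:ℝ) < 2^(n+1) := by positivity
        have hp2 : (0:ℝ) < 2^k := by positivity
        field_simp
        nlinarith [h1, h2]
      -- Step C : the chain estimate
      have hchain : ∀ T, T ⊆ S₁ →
          (1 - ε)^T.card * ((avoid k n S₂).card : ℝ) ≤ ((avoid k n (S₂ ∪ T)).card : ℝ) := by
        intro T
        induction T using Finset.induction_on with
        | empty => intro _; simp
        | @insert r T hrT ih2 =>
          intro hins
          have hTs : T ⊆ S₁ := (Finset.subset_insert r T).trans hins
          have h1 := ih2 hTs
          have hrS₁ : r ∈ S₁ := hins (Finset.mem_insert_self r T)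
          have hrS : r ∈ S := hS₁S hrS₁
          have hrAP : r ∈ APs k n := hS hrS
          have hsub2 : S₂ ∪ T ⊆ S.erase r := by
            intro y hy
            rw [Finset.mem_union] at hy
            rw [Finset.mem_erase]
            rcases hy with hy | hy
            · refine ⟨?_, hS₂S hy⟩
              rintro rfl
              rw [hS₂, Finset.mem_filter] at hy
              rw [hS₁, Finset.mem_filter] at hrS₁
              exact hrS₁.2 hy.2
            · exact ⟨by rintro rfl; exact hrT hy, hS₁S (hTs hy)⟩
          have hcard2 : (S₂ ∪ T).card < m := by
            have h3 : (S.erase r).card < S.card := Finset.card_erase_lt_of_mem hrS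
            have h4 := Finset.card_le_card hsub2
            exact lt_of_le_of_lt h4 (lt_of_lt_of_le h3 hSm)
          have hsubAP : S₂ ∪ T ⊆ APs k n := by
            intro y hy
            rw [Finset.mem_union] at hy
            rcases hy with hy | hy
            · exact hS (hS₂S hy)
            · exact hS (hS₁S (hTs hy))
          have h2 := ih (S₂ ∪ T).card hcard2 (S₂ ∪ T) hsubAP le_rfl r hrAP
          have hU : insert r (S₂ ∪ T) = S₂ ∪ insert r T := by
            ext y
            simp only [Finset.mem_insert, Finset.mem_union]
            tauto
          have hεle1 : (0:ℝ) ≤ 1 - ε := by linarith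
          calc (1-ε)^(insert r T).card * ((avoid k n S₂).card : ℝ)
              = (1-ε) * ((1-ε)^T.card * ((avoid k n S₂).card : ℝ)) := by
                rw [Finset.card_insert_of_notMem hrT, pow_succ]; ring
            _ ≤ (1-ε) * ((avoid k n (S₂ ∪ T)).card : ℝ) :=
                mul_le_mul_of_nonneg_left h1 hεle1
            _ ≤ ((avoid k n (insert r (S₂ ∪ T))).card : ℝ) := h2
            _ = ((avoid k n (S₂ ∪ insert r T)).card : ℝ) := by rw [hU]
      -- Step D : degree bound for S₁
      have hdeg : S₁.card + 1 ≤ k * (n-1) := by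
        have hins : insert q S₁ ⊆ (APs k n).filter
            (fun r => ¬ Disjoint (pts k n r) (pts k n q)) := by
          intro y hy
          rw [Finset.mem_insert] at hy
          rw [Finset.mem_filter]
          rcases hy with rfl | hy
          · refine ⟨hq, ?_⟩
            rw [Finset.not_disjoint_iff]
            have hk1 : 1 ≤ k := le_trans (by norm_num) hk
            exact ⟨pt n y 0, pt_zero_mem k n hk1, pt_zero_mem k n hk1⟩
          · rw [hS₁, Finset.mem_filter] at hy
            exact ⟨hS hy.1, hy.2⟩
        have h5 := Finset.card_le_card hins
        rw [Finset.card_insert_of_notMem (fun h => hqS (hS₁S h))] at h5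
        exact le_trans h5 (degree_bound k n hk hq)
      -- Step E : the exponential bound
      have hεS : ε * (S₁.card + 1) ≤ 1 := by
        have h6 : ((S₁.card : ℝ) + 1) ≤ (k : ℝ) * (n+1) := by
          have h7 : k * (n-1) ≤ k * (n+1) :=
            Nat.mul_le_mul_left _ ((Nat.sub_le n 1).trans (Nat.le_succ n))
          have h8 : S₁.card + 1 ≤ k * (n+1) := le_trans hdeg h7
          have h9 : ((S₁.card + 1 : ℕ) : ℝ) ≤ ((k * (n+1) : ℕ) : ℝ) := by exact_mod_cast h8
          push_cast at h9
          linarith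
        calc ε * (S₁.card + 1) ≤ ε * ((k:ℝ) * (n+1)) := mul_le_mul_of_nonneg_left h6 hε0
          _ ≤ 1 := Hd
      have hexp : Real.exp (-1) ≤ (1-ε)^S₁.card := by
        apply eps_pow_bound S₁.card ε hε0
        exact_mod_cast hεS
      -- Step F : combine everything
      have hNS := hchain S₁ le_rfl
      rw [hunion] at hNS
      have hN2 : ((avoid k n S₂).card : ℝ) ≤ Real.exp 1 * ((avoid k n S).card : ℝ) := by
        have hN2nn : (0:ℝ) ≤ ((avoid k n S₂).card : ℝ) := Nat.cast_nonneg _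
        have h10 : Real.exp (-1) * ((avoid k n S₂).card : ℝ)
            ≤ ((avoid k n S).card : ℝ) := by
          calc Real.exp (-1) * ((avoid k n S₂).card : ℝ)
              ≤ (1-ε)^S₁.card * ((avoid k n S₂).card : ℝ) :=
                mul_le_mul_of_nonneg_right hexp hN2nn
            _ ≤ _ := hNS
        have hepos : (0:ℝ) < Real.exp 1 := Real.exp_pos 1
        have h11 : Real.exp 1 * Real.exp (-1) = 1 := by
          rw [← Real.exp_add]; norm_num
        nlinarith
      have hM : (((avoid k n S).filter
            (fun f => ∀ x ∈ pts k n q, f x = f (pt n q 0))).card : ℝ)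
          ≤ ε * ((avoid k n S).card : ℝ) := by
        calc (((avoid k n S).filter
              (fun f => ∀ x ∈ pts k n q, f x = f (pt n q 0))).card : ℝ)
            ≤ ((monoSet k n q ∩ avoid k n S₂).card : ℝ) := by
              exact_mod_cast Finset.card_le_card hB1
          _ = (2 / 2^k) * ((avoid k n S₂).card : ℝ) := hB
          _ ≤ (2 / 2^k) * (Real.exp 1 * ((avoid k n S).card : ℝ)) := by
              apply mul_le_mul_of_nonneg_left hN2 (by positivity)
          _ = ε * ((avoid k n S).card : ℝ) := by rw [hεdef]; ring
      have hAr : (((avoid k n S).filter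
            (fun f => ∀ x ∈ pts k n q, f x = f (pt n q 0))).card : ℝ)
          + ((avoid k n (insert q S)).card : ℝ) = ((avoid k n S).card : ℝ) := by
        exact_mod_cast congrArg (Nat.cast (R := ℝ)) hA
      linarith

lemma avoid_pos (hk : 2 ≤ k)
    (Hd : (Real.exp 1 * (2 / 2^k)) * ((k : ℝ) * (n+1)) ≤ 1) :
    ∀ S ⊆ APs k n, 0 < (avoid k n S).card := by
  classical
  set ε : ℝ := Real.exp 1 * (2 / 2^k) with hεdef
  have hε0 : 0 ≤ ε := by positivity
  have hkn2 : (2:ℝ) ≤ (k : ℝ) * (n+1) := by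
    have h1 : (2:ℝ) ≤ (k:ℝ) := by exact_mod_cast hk
    nlinarith [Nat.cast_nonneg (α := ℝ) n]
  have hε1 : ε ≤ 1/2 := by nlinarith
  intro S
  induction S using Finset.induction_on with
  | empty =>
    intro _
    have : avoid k n ∅ = univ := by
      ext f; simp [avoid]
    rw [this, Finset.card_univ]
    exact Fintype.card_pos
  | @insert q S hqS ih =>
    intro hins
    have hSsub : S ⊆ APs k n := (Finset.subset_insert q S).trans hins
    have hq : q ∈ APs k n := hins (Finset.mem_insert_self q S)
    have hpos := ih hSsub
    have hstep := lll_step k n hk Hd S.card S hSsub le_rfl q hq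
    have hposR : (0:ℝ) < ((avoid k n S).card : ℝ) := by exact_mod_cast hpos
    have : (0:ℝ) < ((avoid k n (insert q S)).card : ℝ) := by nlinarith
    exact_mod_cast this

end LLLAP

/-- If `k ≥ 2` and `n ≤ 2^(k-1)/(e·k) - 1`, then there is a 2-coloring of `{1,…,n}`
with no monochromatic `k`-term arithmetic progression. -/
theorem exists_coloring_no_mono_ap (k n : ℕ) (hk : 2 ≤ k)
    (hn : (n : ℝ) ≤ 2 ^ (k - 1) / (Real.exp 1 * k) - 1) :
    ∃ χ : ℕ → Bool, ∀ a d : ℕ, 1 ≤ a → 1 ≤ d → a + (k - 1) * d ≤ n →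
      ¬ ∀ i : ℕ, i < k → χ (a + i * d) = χ a := by
  classical
  open Finset LLLAP in
  -- derive the master inequality
  have hkR : (0:ℝ) < (k:ℝ) := by
    have : (2:ℝ) ≤ (k:ℝ) := by exact_mod_cast hk
    linarith
  have hek : (0:ℝ) < Real.exp 1 * k := by positivity
  have h1 : ((n:ℝ) + 1) * (Real.exp 1 * k) ≤ 2 ^ (k-1) := by
    have h2 : (n:ℝ) + 1 ≤ 2 ^ (k-1) / (Real.exp 1 * k) := by linarith
    calc ((n:ℝ) + 1) * (Real.exp 1 * k)
        ≤ (2 ^ (k-1) / (Real.exp 1 * k)) * (Real.exp 1 * k) :=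
          mul_le_mul_of_nonneg_right h2 (le_of_lt hek)
      _ = 2 ^ (k-1) := div_mul_cancel₀ _ (ne_of_gt hek)
  have h2k : (2:ℝ)^k = 2^(k-1) * 2 := by
    rw [← pow_succ]
    congr 1
    omega
  have hp : (0:ℝ) < (2:ℝ)^(k-1) := by positivity
  have Hd : (Real.exp 1 * (2 / 2^k)) * ((k : ℝ) * (n+1)) ≤ 1 := by
    rw [h2k]
    rw [show (2:ℝ)/(2^(k-1) * 2) = 1/2^(k-1) by field_simp]
    rw [mul_one_div, div_mul_eq_mul_div, div_le_one hp]
    have : Real.exp 1 * ((k:ℝ) * ((n:ℝ)+1)) = ((n:ℝ)+1) * (Real.exp 1 * k) := by ring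
    linarith
  -- get a good coloring on Fin (n+1)
  have hpos := avoid_pos k n hk Hd (APs k n) Finset.Subset.rfl
  obtain ⟨f, hf⟩ := Finset.card_pos.mp hpos
  rw [avoid, Finset.mem_filter] at hf
  -- transfer to ℕ → Bool
  refine ⟨fun x => if h : x < n + 1 then f ⟨x, h⟩ else true, ?_⟩
  intro a d ha hd hle H
  have hkd : k - 1 ≤ (k-1) * d := Nat.le_mul_of_pos_right _ hd
  have hdn : d ≤ (k-1) * d := by
    have : 1 * d ≤ (k-1) * d := Nat.mul_le_mul_right d (by omega)
    omega
  have hqAP : (a, d) ∈ APs k n := by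
    rw [mem_APs]
    exact ⟨⟨ha, by omega⟩, ⟨hd, by omega⟩, hle⟩
  apply hf.2 (a, d) hqAP
  intro x hx
  rw [mem_pts k n hqAP] at hx
  obtain ⟨i, hik, hieq⟩ := hx
  have hptv : ∀ j, j < k → (pt n (a, d) j : ℕ) = a + j * d := fun j hj => pt_val k n hqAP hj
  have hxval : (x : ℕ) = a + i * d := hieq.symm
  have hfx : ∀ (y : Fin (n+1)) (z : ℕ) (hz : z < n + 1), (y : ℕ) = z →
      f y = (fun x => if h : x < n + 1 then f ⟨x, h⟩ else true) z := by
    intro y z hz hyz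
    simp only [dif_pos hz]
    congr 1
    exact Fin.ext hyz
  have hile : a + i * d < n + 1 := by
    have := hptv i hik
    omega
  have hale : a < n + 1 := by
    have h0 := hptv 0 (by omega)
    omega
  have e1 : f x = (fun x => if h : x < n + 1 then f ⟨x, h⟩ else true) (a + i*d) :=
    hfx x (a + i*d) hile hxval
  have e2 : f (pt n (a, d) 0) = (fun x => if h : x < n + 1 then f ⟨x, h⟩ else true) a := by
    apply hfx _ a hale
    simpa using hptv 0 (by omega)
  rw [e1, e2]
  exact H i hik
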